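/- Let G be a graph on n ≥ 6 vertices and k = ⌈n/2⌉. If Σ_{v∈V(G)} 2^{−deg(v)−1} ≤ 1/(n+2), then the domination sequence d_0(G), …, d_n(G) is unimodal with mode k; i.e., d_j(G) is nondecreasing for j ≤ k and nonincreasing for j ≥ k. -/
import Mathlib


open Finset

/-- The closed neighborhood of a vertex as a `Finset`. -/
def closedNbhd {V : Type*} [Fintype V] [DecidableEq V] (G : SimpleGraph V)
    [DecidableRel G.Adj] (v : V) : Finset V :=
  insert v (G.neighborFinset v)

/-- The number of dominating sets of size `k`. -/
def domCount {V : Type*} [Fintype V] [DecidableEq V] (G : SimpleGraph V)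
    [DecidableRel G.Adj] (k : ℕ) : ℕ :=
  ((univ.powersetCard k).filter (fun S : Finset V => ∀ v : V, ∃ u ∈ S, u ∈ closedNbhd G v)).card

/- ### Auxiliary arithmetic lemmas -/

lemma aux_choose_half_le (a j : ℕ) (hj : 1 ≤ j) (ha : a ≤ 2 * j) :
    2 * (a - 1).choose j ≤ a.choose j := by
  rcases Nat.eq_zero_or_pos a with h0 | hpos
  · subst h0
    simp [Nat.choose_eq_zero_of_lt hj]
  · have key := Nat.choose_mul_succ_eq (a - 1) j
    rw [Nat.sub_add_cancel hpos] at key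
    -- key : (a-1).choose j * a = a.choose j * (a - j)
    have h2 : (2 * (a - 1).choose j) * a ≤ a.choose j * a := by
      have h3 : 2 * (a - j) ≤ a := by omega
      calc (2 * (a - 1).choose j) * a = 2 * ((a - 1).choose j * a) := by ring
        _ = 2 * (a.choose j * (a - j)) := by rw [key]
        _ = a.choose j * (2 * (a - j)) := by ring
        _ ≤ a.choose j * a := Nat.mul_le_mul_left _ h3
    exact Nat.le_of_mul_le_mul_right h2 hpos

lemma aux_pow_mul_choose_le (n j : ℕ) (hj : 1 ≤ j) (hnj : n ≤ 2 * j) (m : ℕ) :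
    2 ^ m * (n - m).choose j ≤ n.choose j := by
  induction m with
  | zero => simp
  | succ m ih =>
      have h1 : n - (m + 1) = (n - m) - 1 := by omega
      have h2 : 2 * ((n - m) - 1).choose j ≤ (n - m).choose j :=
        aux_choose_half_le (n - m) j hj (by omega)
      calc 2 ^ (m + 1) * (n - (m + 1)).choose j
          = 2 ^ m * (2 * ((n - m) - 1).choose j) := by rw [h1]; ring
        _ ≤ 2 ^ m * (n - m).choose j := Nat.mul_le_mul_left _ h2
        _ ≤ n.choose j := ih

lemma aux_lin (n j : ℕ) (hnj : n ≤ 2 * j) : (n + 2) * (n - j) ≤ (n + 1) * (j + 1) := by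
  rcases le_or_gt n j with h | h
  · have : n - j = 0 := by omega
    simp [this]
  · set t := n - j with ht
    have hn : n = j + t := by omega
    have hle : t ≤ j := by omega
    have := Nat.mul_le_mul hle hle
    nlinarith

lemma aux_choose_ratio (n j : ℕ) (hnj : n ≤ 2 * j) :
    (n + 2) * n.choose (j + 1) ≤ (n + 1) * n.choose j := by
  have key := Nat.choose_succ_right_eq n j
  -- key : n.choose (j+1) * (j+1) = n.choose j * (n - j)
  have h2 : ((n + 2) * n.choose (j + 1)) * (j + 1) ≤ ((n + 1) * n.choose j) * (j + 1) := by
    calc ((n + 2) * n.choose (j + 1)) * (j + 1) = (n + 2) * (n.choose (j + 1) * (j + 1)) := by ring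
      _ = (n + 2) * (n.choose j * (n - j)) := by rw [key]
      _ = n.choose j * ((n + 2) * (n - j)) := by ring
      _ ≤ n.choose j * ((n + 1) * (j + 1)) := Nat.mul_le_mul_left _ (aux_lin n j hnj)
      _ = ((n + 1) * n.choose j) * (j + 1) := by ring
  exact Nat.le_of_mul_le_mul_right h2 (Nat.succ_pos j)

/- ### Graph-theoretic lemmas -/

section Graph

variable {V : Type*} [Fintype V] [DecidableEq V] (G : SimpleGraph V) [DecidableRel G.Adj]

lemma card_closedNbhd (v : V) : (closedNbhd G v).card = G.degree v + 1 := by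
  rw [closedNbhd, card_insert_of_notMem (G.notMem_neighborFinset_self v),
    G.card_neighborFinset_eq_degree]

lemma domCount_le_choose (j : ℕ) : domCount G j ≤ (Fintype.card V).choose j := by
  calc domCount G j ≤ (univ.powersetCard j : Finset (Finset V)).card := card_filter_le _ _
    _ = (Fintype.card V).choose j := by rw [card_powersetCard, card_univ]

lemma choose_le_domCount_add (j : ℕ) (hj : 1 ≤ j) :
    (Fintype.card V).choose j ≤
      domCount G j + ∑ v : V, (Fintype.card V - 1 - G.degree v).choose j := by
  classical
  set n := Fintype.card V with hn
  have hpart := Finset.card_filter_add_card_filter_not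
    (s := (univ.powersetCard j : Finset (Finset V)))
    (p := fun S : Finset V => ∀ v : V, ∃ u ∈ S, u ∈ closedNbhd G v)
  have hcard : (univ.powersetCard j : Finset (Finset V)).card = n.choose j := by
    rw [card_powersetCard, card_univ]
  have hsub : ((univ.powersetCard j : Finset (Finset V)).filter
      (fun S : Finset V => ¬ ∀ v : V, ∃ u ∈ S, u ∈ closedNbhd G v)) ⊆
      (univ : Finset V).biUnion (fun v => (univ \ closedNbhd G v).powersetCard j) := by
    intro S hS
    simp only [mem_filter, mem_powersetCard_univ] at hS
    obtain ⟨hSc, hSd⟩ := hS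
    push_neg at hSd
    obtain ⟨v, hv⟩ := hSd
    refine mem_biUnion.2 ⟨v, mem_univ v, ?_⟩
    rw [mem_powersetCard]
    refine ⟨fun u hu => ?_, hSc⟩
    rw [mem_sdiff]
    exact ⟨mem_univ u, hv u hu⟩
  have hbound : ((univ.powersetCard j : Finset (Finset V)).filter
      (fun S : Finset V => ¬ ∀ v : V, ∃ u ∈ S, u ∈ closedNbhd G v)).card ≤
      ∑ v : V, (n - 1 - G.degree v).choose j := by
    calc _ ≤ ((univ : Finset V).biUnion (fun v => (univ \ closedNbhd G v).powersetCard j)).card :=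
          card_le_card hsub
      _ ≤ ∑ v : V, ((univ \ closedNbhd G v).powersetCard j).card := card_biUnion_le
      _ = ∑ v : V, (n - 1 - G.degree v).choose j := by
          refine Finset.sum_congr rfl (fun v _ => ?_)
          rw [card_powersetCard, card_sdiff_of_subset (subset_univ _), card_univ, card_closedNbhd]
          congr 1
          omega
  calc n.choose j = domCount G j + ((univ.powersetCard j : Finset (Finset V)).filter
        (fun S : Finset V => ¬ ∀ v : V, ∃ u ∈ S, u ∈ closedNbhd G v)).card := by
        rw [domCount, ← hcard, hpart]
    _ ≤ domCount G j + ∑ v : V, (n - 1 - G.degree v).choose j := by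
        exact Nat.add_le_add_left hbound _

lemma domCount_step_up (j : ℕ) (hj : 2 * j + 1 ≤ Fintype.card V) :
    domCount G j ≤ domCount G (j + 1) := by
  classical
  set n := Fintype.card V with hn
  have key : domCount G j * (n - j) ≤ domCount G (j + 1) * (j + 1) := by
    apply Finset.card_mul_le_card_mul (fun S T : Finset V => S ⊆ T)
    · intro S hS
      simp only [mem_filter, mem_powersetCard_univ] at hS
      have hinj : Set.InjOn (fun x => insert x S) ↑(univ \ S) := by
        intro x hx y hy hxy
        simp only [coe_sdiff, coe_univ, Set.mem_diff, Set.mem_univ, true_and, mem_coe] at hx hy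
        simp only at hxy
        have : x ∈ insert y S := hxy ▸ mem_insert_self x S
        rcases mem_insert.1 this with h | h
        · exact h
        · exact absurd h hx
      have himg : ((univ \ S).image (fun x => insert x S)) ⊆
          (((univ.powersetCard (j + 1)).filter
            (fun T : Finset V => ∀ v : V, ∃ u ∈ T, u ∈ closedNbhd G v)).bipartiteAbove
            (fun S T : Finset V => S ⊆ T) S) := by
        intro T hT
        simp only [mem_image, mem_sdiff, mem_univ, true_and] at hT
        obtain ⟨x, hx, rfl⟩ := hT
        rw [mem_bipartiteAbove]
        refine ⟨mem_filter.2 ⟨mem_powersetCard_univ.2 ?_, fun v => ?_⟩, subset_insert x S⟩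
        · rw [card_insert_of_notMem hx, hS.1]
        · obtain ⟨u, hu, hu2⟩ := hS.2 v
          exact ⟨u, mem_insert_of_mem hu, hu2⟩
      calc n - j = (univ \ S).card := by rw [card_sdiff_of_subset (subset_univ _), card_univ, hS.1]
        _ = ((univ \ S).image (fun x => insert x S)).card := (card_image_of_injOn hinj).symm
        _ ≤ _ := card_le_card himg
    · intro T hT
      simp only [mem_filter, mem_powersetCard_univ] at hT
      have hsub : (((univ.powersetCard j).filter
          (fun S : Finset V => ∀ v : V, ∃ u ∈ S, u ∈ closedNbhd G v)).bipartiteBelow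
          (fun S T : Finset V => S ⊆ T) T) ⊆ T.powersetCard j := by
        intro S hS
        rw [mem_bipartiteBelow] at hS
        rw [mem_powersetCard]
        exact ⟨hS.2, (mem_powersetCard_univ.1 (mem_filter.1 hS.1).1)⟩
      calc _ ≤ (T.powersetCard j).card := card_le_card hsub
        _ = (j + 1).choose j := by rw [card_powersetCard, hT.1]
        _ = j + 1 := Nat.choose_succ_self_right j
  have hle : j + 1 ≤ n - j := by omega
  have h2 : domCount G j * (j + 1) ≤ domCount G (j + 1) * (j + 1) :=
    le_trans (Nat.mul_le_mul_left _ hle) key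
  exact Nat.le_of_mul_le_mul_right h2 (Nat.succ_pos j)

lemma domCount_step_down (hn : 6 ≤ Fintype.card V)
    (hσ : ∑ v : V, (2 : ℚ) ^ (-(G.degree v : ℤ) - 1) ≤ 1 / (Fintype.card V + 2))
    (j : ℕ) (hj : (Fintype.card V + 1) / 2 ≤ j) :
    domCount G (j + 1) ≤ domCount G j := by
  classical
  set n := Fintype.card V with hn'
  have hnj : n ≤ 2 * j := by omega
  have hj1 : 1 ≤ j := by omega
  have hnpos : (0 : ℚ) < (n : ℚ) + 2 := by positivity
  -- per vertex bound in ℚ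
  have hvert : ∀ v : V, ((n - 1 - G.degree v).choose j : ℚ) ≤
      (n.choose j : ℚ) * (2 : ℚ) ^ (-(G.degree v : ℤ) - 1) := by
    intro v
    have hnat := aux_pow_mul_choose_le n j hj1 hnj (G.degree v + 1)
    have heq : n - (G.degree v + 1) = n - 1 - G.degree v := by omega
    rw [heq] at hnat
    have hq : (2 : ℚ) ^ (G.degree v + 1) * ((n - 1 - G.degree v).choose j : ℚ)
        ≤ (n.choose j : ℚ) := by exact_mod_cast hnat
    have hzpow : (2 : ℚ) ^ (-(G.degree v : ℤ) - 1) = ((2 : ℚ) ^ (G.degree v + 1))⁻¹ := by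
      rw [show (-(G.degree v : ℤ) - 1) = -((G.degree v : ℤ) + 1) by ring, zpow_neg]
      norm_cast
    rw [hzpow, ← div_eq_mul_inv, le_div_iff₀ (by positivity)]
    linarith [hq]
  -- sum bound
  have hsum : ∑ v : V, ((n - 1 - G.degree v).choose j : ℚ) ≤ (n.choose j : ℚ) / (n + 2) := by
    calc ∑ v : V, ((n - 1 - G.degree v).choose j : ℚ)
        ≤ ∑ v : V, (n.choose j : ℚ) * (2 : ℚ) ^ (-(G.degree v : ℤ) - 1) :=
          Finset.sum_le_sum (fun v _ => hvert v)
      _ = (n.choose j : ℚ) * ∑ v : V, (2 : ℚ) ^ (-(G.degree v : ℤ) - 1) := by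
          rw [Finset.mul_sum]
      _ ≤ (n.choose j : ℚ) * (1 / (n + 2)) := by
          apply mul_le_mul_of_nonneg_left hσ (by positivity)
      _ = (n.choose j : ℚ) / (n + 2) := by ring
  -- lower bound on domCount G j
  have hlow : (n.choose j : ℚ) - (n.choose j : ℚ) / (n + 2) ≤ (domCount G j : ℚ) := by
    have h1 : (n.choose j : ℚ) ≤ (domCount G j : ℚ) + ∑ v : V, ((n - 1 - G.degree v).choose j : ℚ) := by
      have := choose_le_domCount_add G j hj1
      push_cast
      exact_mod_cast this
    linarith [hsum]
  -- upper bound on domCount G (j+1)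
  have hratio : ((n : ℚ) + 2) * (n.choose (j + 1) : ℚ) ≤ ((n : ℚ) + 1) * (n.choose j : ℚ) := by
    exact_mod_cast aux_choose_ratio n j hnj
  have hup : (domCount G (j + 1) : ℚ) ≤ (n.choose j : ℚ) - (n.choose j : ℚ) / (n + 2) := by
    have h1 : (domCount G (j + 1) : ℚ) ≤ (n.choose (j + 1) : ℚ) := by
      exact_mod_cast domCount_le_choose G (j + 1)
    have h2 : (n.choose (j + 1) : ℚ) ≤ ((n : ℚ) + 1) / ((n : ℚ) + 2) * (n.choose j : ℚ) := by
      rw [div_mul_eq_mul_div, le_div_iff₀ hnpos]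
      linarith [hratio]
    have h3 : ((n : ℚ) + 1) / ((n : ℚ) + 2) * (n.choose j : ℚ)
        = (n.choose j : ℚ) - (n.choose j : ℚ) / (n + 2) := by
      field_simp
      ring
    linarith
  have : (domCount G (j + 1) : ℚ) ≤ (domCount G j : ℚ) := le_trans hup hlow
  exact_mod_cast this

end Graph

/-- If `n ≥ 6` and `σ(G) = Σ_v 2^{-deg(v)-1} ≤ 1/(n+2)`, then the domination
sequence of `G` is unimodal with mode `k = ⌈n/2⌉`. -/
theorem sigma_criterion_unimodal {V : Type*} [Fintype V] [DecidableEq V]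
    (G : SimpleGraph V) [DecidableRel G.Adj]
    (hn : 6 ≤ Fintype.card V)
    (hσ : ∑ v : V, (2 : ℚ) ^ (-(G.degree v : ℤ) - 1) ≤ 1 / (Fintype.card V + 2)) :
    letI k : ℕ := (Fintype.card V + 1) / 2
    (∀ i j : ℕ, i ≤ j → j ≤ k → domCount G i ≤ domCount G j)
    ∧ (∀ i j : ℕ, k ≤ i → i ≤ j → domCount G j ≤ domCount G i) := by
  set n := Fintype.card V with hn'
  refine ⟨?_, ?_⟩
  · intro i j hij hjk
    induction j, hij using Nat.le_induction with
    | base => exact le_refl _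
    | succ j hij ih =>
        have h1 : domCount G i ≤ domCount G j := ih (by omega)
        have h2 : domCount G j ≤ domCount G (j + 1) :=
          domCount_step_up G j (by omega)
        exact le_trans h1 h2
  · intro i j hki hij
    induction j, hij using Nat.le_induction with
    | base => exact le_refl _
    | succ j hij ih =>
        have h1 : domCount G j ≤ domCount G i := ih
        have h2 : domCount G (j + 1) ≤ domCount G j :=
          domCount_step_down G hn hσ j (by omega)
        exact le_trans h2 h1
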